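/- Let n ≥ 2 be an integer. Then, as the real parameter L → ∞, L^{n+1/2} · ∑_{k=1}^∞ Γ(Lk − n/2) Γ(Lk − (n−1)/2)/(Γ(Lk+1))² · (Lk + n(n−1)/2) converges to ζ(n + 1/2), where ζ is the Riemann zeta function. Equivalently, with C(L,n) = (L²/(4√π (n−1)!)) ∑_{k=1}^∞ Γ(Lk−n/2)Γ(Lk−(n−1)/2)/(Γ(Lk+1))² (Lk + n(n−1)/2), one has lim_{L→∞} L^{n−3/2} C(L,n) = ζ(n+1/2)/(4√π Γ(n)). -/

import Mathlib

section AuxGammaAsymptotics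

open Filter Real Set Topology

/-- Log-convexity of Gamma in multiplicative form. -/
lemma gamma_combo {u v θ : ℝ} (hu : 0 < u) (hv : 0 < v) (h0 : 0 ≤ θ) (h1 : θ ≤ 1) :
    Real.Gamma (θ * u + (1 - θ) * v) ≤ Real.Gamma u ^ θ * Real.Gamma v ^ (1 - θ) := by
  have h := Real.convexOn_log_Gamma.2 (Set.mem_Ioi.2 hu) (Set.mem_Ioi.2 hv) h0 (sub_nonneg.2 h1)
    (by ring : θ + (1 - θ) = 1)
  simp only [smul_eq_mul, Function.comp_apply] at h
  have hcpos : 0 < θ * u + (1 - θ) * v := by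
    rcases eq_or_lt_of_le h0 with h0' | h0'
    · simpa [← h0'] using hv
    · rcases eq_or_lt_of_le h1 with h1' | h1'
      · simp only [h1']; nlinarith
      · nlinarith
  calc Real.Gamma (θ * u + (1 - θ) * v)
      = Real.exp (Real.log (Real.Gamma (θ * u + (1 - θ) * v))) :=
        (Real.exp_log (Real.Gamma_pos_of_pos hcpos)).symm
    _ ≤ Real.exp (θ * Real.log (Real.Gamma u) + (1 - θ) * Real.log (Real.Gamma v)) :=
        Real.exp_le_exp.2 h
    _ = Real.Gamma u ^ θ * Real.Gamma v ^ (1 - θ) := by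
        rw [Real.exp_add, Real.rpow_def_of_pos (Real.Gamma_pos_of_pos hu),
          Real.rpow_def_of_pos (Real.Gamma_pos_of_pos hv), mul_comm (Real.log _),
          mul_comm (Real.log _)]

/-- Wendel's upper bound. -/
lemma wendel_upper {x s : ℝ} (hx : 0 < x) (h0 : 0 ≤ s) (h1 : s ≤ 1) :
    Real.Gamma (x + s) ≤ Real.Gamma x * x ^ s := by
  have h := gamma_combo (u := x + 1) (v := x) (θ := s) (by linarith) hx h0 h1
  have he : s * (x + 1) + (1 - s) * x = x + s := by ring
  rw [he] at h
  have hG : 0 < Real.Gamma x := Real.Gamma_pos_of_pos hx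
  calc Real.Gamma (x + s) ≤ Real.Gamma (x + 1) ^ s * Real.Gamma x ^ (1 - s) := h
    _ = Real.Gamma x * x ^ s := by
        rw [Real.Gamma_add_one hx.ne', Real.mul_rpow hx.le hG.le, mul_assoc,
          ← Real.rpow_add hG, add_sub_cancel, Real.rpow_one, mul_comm]

/-- Wendel's lower bound. -/
lemma wendel_lower {x s : ℝ} (hx : 0 < x) (h0 : 0 ≤ s) (h1 : s ≤ 1) :
    x * Real.Gamma x / (x + s) ^ (1 - s) ≤ Real.Gamma (x + s) := by
  have h := wendel_upper (x := x + s) (s := 1 - s) (by linarith) (by linarith) (by linarith)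
  rw [show x + s + (1 - s) = x + 1 by ring, Real.Gamma_add_one hx.ne'] at h
  rw [div_le_iff₀ (Real.rpow_pos_of_pos (by linarith) _)]
  linarith [h]

/-- Ratio limit for shifts in `[0,1]`. -/
lemma ratio_tendsto_base {s : ℝ} (h0 : 0 ≤ s) (h1 : s ≤ 1) :
    Tendsto (fun x : ℝ => Real.Gamma (x + s) / (Real.Gamma x * x ^ s)) atTop (𝓝 1) := by
  have hlow : Tendsto (fun x : ℝ => (x / (x + s)) ^ (1 - s)) atTop (𝓝 1) := by
    have h1' : Tendsto (fun x : ℝ => x / (x + s)) atTop (𝓝 1) := by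
      have : Tendsto (fun x : ℝ => 1 - s / (x + s)) atTop (𝓝 (1 - 0)) :=
        tendsto_const_nhds.sub (Tendsto.const_div_atTop
          (tendsto_atTop_add_const_right _ s tendsto_id) s)
      rw [sub_zero] at this
      refine this.congr' ?_
      filter_upwards [eventually_gt_atTop (|s| + 1)] with x hx
      have hxs : 0 < x + s := by
        have := le_abs_self s; have := neg_abs_le s; linarith
      field_simp
      ring
    have := h1'.rpow_const (p := 1 - s) (Or.inl one_ne_zero)
    simpa using this
  refine tendsto_of_tendsto_of_tendsto_of_le_of_le' hlow tendsto_const_nhds ?_ ?_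
  · filter_upwards [eventually_gt_atTop (0:ℝ)] with x hx
    have hxs : 0 < x + s := by linarith
    have hG : 0 < Real.Gamma x := Real.Gamma_pos_of_pos hx
    have hr : 0 < x ^ s := Real.rpow_pos_of_pos hx _
    have hlb := wendel_lower hx h0 h1
    have hlb' : x * Real.Gamma x ≤ Real.Gamma (x + s) * (x + s) ^ (1 - s) :=
      (div_le_iff₀ (Real.rpow_pos_of_pos hxs _)).1 hlb
    rw [Real.div_rpow hx.le hxs.le, Real.rpow_sub hx, Real.rpow_one, div_div,
      div_le_div_iff₀ (by positivity) (by positivity)]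
    nlinarith [mul_le_mul_of_nonneg_right hlb' hr.le, (Real.rpow_pos_of_pos hxs (1-s)).le]
  · filter_upwards [eventually_gt_atTop (0:ℝ)] with x hx
    have hG : 0 < Real.Gamma x := Real.Gamma_pos_of_pos hx
    have hr : 0 < x ^ s := Real.rpow_pos_of_pos hx _
    rw [div_le_one (by positivity)]
    exact wendel_upper hx h0 h1

lemma aux_div_tendsto (c : ℝ) : Tendsto (fun x : ℝ => (x + c) / x) atTop (𝓝 1) := by
  have : Tendsto (fun x : ℝ => 1 + c / x) atTop (𝓝 (1 + 0)) :=
    tendsto_const_nhds.add (Tendsto.const_div_atTop tendsto_id c)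
  rw [add_zero] at this
  refine this.congr' ?_
  filter_upwards [eventually_gt_atTop (0:ℝ)] with x hx
  field_simp

lemma aux_div_tendsto' (c : ℝ) : Tendsto (fun x : ℝ => x / (x + c)) atTop (𝓝 1) := by
  have := (aux_div_tendsto c).inv₀ one_ne_zero
  rw [inv_one] at this
  refine this.congr' ?_
  filter_upwards [eventually_gt_atTop (|c| + 1)] with x hx
  rw [inv_div]

lemma ratio_step_up {a : ℝ}
    (h : Tendsto (fun x : ℝ => Real.Gamma (x + a) / (Real.Gamma x * x ^ a)) atTop (𝓝 1)) :
    Tendsto (fun x : ℝ => Real.Gamma (x + (a + 1)) / (Real.Gamma x * x ^ (a + 1))) atTop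
      (𝓝 1) := by
  have := h.mul (aux_div_tendsto a)
  rw [mul_one] at this
  refine this.congr' ?_
  filter_upwards [eventually_gt_atTop (max 0 (-a)), eventually_gt_atTop (0:ℝ)] with x hx hx0
  have hxa : 0 < x + a := by have := lt_of_le_of_lt (le_max_right 0 (-a)) hx; linarith
  rw [show x + (a + 1) = (x + a) + 1 by ring, Real.Gamma_add_one hxa.ne',
    Real.rpow_add_one hx0.ne' a]
  have hG : 0 < Real.Gamma x := Real.Gamma_pos_of_pos hx0
  have hr : 0 < x ^ a := Real.rpow_pos_of_pos hx0 _
  field_simp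

lemma ratio_step_down {a : ℝ}
    (h : Tendsto (fun x : ℝ => Real.Gamma (x + a) / (Real.Gamma x * x ^ a)) atTop (𝓝 1)) :
    Tendsto (fun x : ℝ => Real.Gamma (x + (a - 1)) / (Real.Gamma x * x ^ (a - 1))) atTop
      (𝓝 1) := by
  have := h.mul (aux_div_tendsto' (a - 1))
  rw [mul_one] at this
  refine this.congr' ?_
  filter_upwards [eventually_gt_atTop (max 0 (1 - a)), eventually_gt_atTop (0:ℝ)] with x hx hx0
  have hxa : 0 < x + a - 1 := by have := lt_of_le_of_lt (le_max_right 0 (1 - a)) hx; linarith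
  have hGam : Real.Gamma (x + a) = (x + a - 1) * Real.Gamma (x + (a - 1)) := by
    rw [show x + a = (x + (a - 1)) + 1 by ring] ; rw [Real.Gamma_add_one (by linarith)]
    ring_nf
  rw [hGam, show x + (a - 1) = x + a - 1 by ring]
  have hG : 0 < Real.Gamma x := Real.Gamma_pos_of_pos hx0
  have hr : 0 < x ^ (a - 1) := Real.rpow_pos_of_pos hx0 _
  have hra : x ^ a = x ^ (a - 1) * x := by
    rw [← Real.rpow_add_one hx0.ne' (a - 1)]; ring_nf
  rw [hra]
  field_simp

lemma ratio_tendsto (a : ℝ) :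
    Tendsto (fun x : ℝ => Real.Gamma (x + a) / (Real.Gamma x * x ^ a)) atTop (𝓝 1) := by
  have key : ∀ m : ℤ, ∀ t : ℝ, 0 ≤ t → t ≤ 1 →
      Tendsto (fun x : ℝ => Real.Gamma (x + ((m : ℝ) + t)) / (Real.Gamma x * x ^ ((m : ℝ) + t)))
        atTop (𝓝 1) := by
    intro m
    induction m using Int.induction_on with
    | zero => intro t h0 h1; simpa using ratio_tendsto_base h0 h1
    | succ n ih =>
        intro t h0 h1
        have : ((n : ℤ) + 1 : ℤ) + (t : ℝ) = ((n : ℝ) + t) + 1 := by push_cast; ring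
        rw [show (((n : ℤ) + 1 : ℤ) : ℝ) + t = ((n : ℤ) : ℝ) + t + 1 by push_cast; ring]
        exact ratio_step_up (ih t h0 h1)
    | pred n ih =>
        intro t h0 h1
        rw [show ((-(n : ℤ) - 1 : ℤ) : ℝ) + t = ((-(n : ℤ) : ℤ) : ℝ) + t - 1 by push_cast; ring]
        exact ratio_step_down (ih t h0 h1)
  have h := key ⌊a⌋ (a - ⌊a⌋) (by linarith [Int.floor_le a]) (by linarith [Int.lt_floor_add_one a])
  simpa using h

lemma Gamma_sub_nat (m : ℕ) {x : ℝ} (hx : (m : ℝ) < x) :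
    Real.Gamma (x + 1) = (∏ i ∈ Finset.range (m + 1), (x - i)) * Real.Gamma (x - m) := by
  induction m with
  | zero =>
      have hx0 : (0:ℝ) < x := by simpa using hx
      simp [Real.Gamma_add_one hx0.ne']
  | succ m ih =>
      have hx' : (m : ℝ) < x := by push_cast at hx; linarith
      push_cast at hx
      have hne : x - ((m:ℝ) + 1) ≠ 0 := by intro h; nlinarith
      have key : Real.Gamma (x - m) = (x - ((m:ℝ) + 1)) * Real.Gamma (x - ((m:ℝ) + 1)) := by
        rw [show x - (m:ℝ) = (x - ((m:ℝ) + 1)) + 1 by ring, Real.Gamma_add_one hne]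
      rw [Finset.prod_range_succ, ih hx', key]
      push_cast
      ring

lemma gamma_pair (n : ℕ) (hn : 2 ≤ n) {x : ℝ} (hx : (n : ℝ) < x) :
    Real.Gamma (x - (n : ℝ) / 2) * Real.Gamma (x - ((n : ℝ) - 1) / 2) ≤
      Real.Gamma (x - n) * Real.Gamma (x + 1 / 2) := by
  set θ : ℝ := ((n : ℝ) + 1) / (2 * n + 1) with hθdef
  have hn1 : (1:ℝ) ≤ (n:ℝ) := by exact_mod_cast Nat.one_le_of_lt hn
  have hden : (0:ℝ) < 2 * n + 1 := by linarith
  have hθ0 : 0 ≤ θ := by positivity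
  have hθ1 : θ ≤ 1 := by rw [hθdef, div_le_one hden]; linarith
  have hu : (0:ℝ) < x - n := by linarith
  have hv : (0:ℝ) < x + 1 / 2 := by linarith
  have e1 : θ * (x - n) + (1 - θ) * (x + 1 / 2) = x - (n : ℝ) / 2 := by
    rw [hθdef]; field_simp; ring
  have e2 : (1 - θ) * (x - n) + θ * (x + 1 / 2) = x - ((n : ℝ) - 1) / 2 := by
    rw [hθdef]; field_simp; ring
  have h1 := gamma_combo hu hv hθ0 hθ1
  have h2 := gamma_combo (θ := 1 - θ) hu hv (by linarith) (by linarith)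
  rw [e1] at h1
  rw [show (1 - (1 - θ)) = θ by ring] at h2
  rw [e2] at h2
  have hGu : 0 < Real.Gamma (x - n) := Real.Gamma_pos_of_pos hu
  have hGv : 0 < Real.Gamma (x + 1 / 2) := Real.Gamma_pos_of_pos hv
  calc Real.Gamma (x - (n : ℝ) / 2) * Real.Gamma (x - ((n : ℝ) - 1) / 2)
      ≤ (Real.Gamma (x - n) ^ θ * Real.Gamma (x + 1/2) ^ (1 - θ)) *
        (Real.Gamma (x - n) ^ (1 - θ) * Real.Gamma (x + 1/2) ^ θ) := by
        apply mul_le_mul h1 h2 (Real.Gamma_pos_of_pos (by linarith)).le (by positivity)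
    _ = Real.Gamma (x - n) * Real.Gamma (x + 1 / 2) := by
        rw [show Real.Gamma (x - n) ^ θ * Real.Gamma (x + 1/2) ^ (1 - θ) *
            (Real.Gamma (x - n) ^ (1 - θ) * Real.Gamma (x + 1/2) ^ θ) =
            (Real.Gamma (x - n) ^ θ * Real.Gamma (x - n) ^ (1 - θ)) *
            (Real.Gamma (x + 1/2) ^ θ * Real.Gamma (x + 1/2) ^ (1 - θ)) by ring,
          ← Real.rpow_add hGu, ← Real.rpow_add hGv]
        simp

lemma term_bound (n : ℕ) (hn : 2 ≤ n) {x : ℝ}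
    (hx : 2 * (n:ℝ) + (n:ℝ) * ((n:ℝ) - 1) / 2 + 2 ≤ x) :
    Real.Gamma (x - (n : ℝ) / 2) * Real.Gamma (x - ((n : ℝ) - 1) / 2) / Real.Gamma (x + 1) ^ 2 *
      (x + (n:ℝ) * ((n : ℝ) - 1) / 2) ≤ 2 ^ (n + 2) * x ^ (-((n : ℝ) + 1 / 2)) := by
  have hn1 : (2:ℝ) ≤ (n:ℝ) := by exact_mod_cast hn
  have hc : (0:ℝ) ≤ (n:ℝ) * ((n:ℝ) - 1) / 2 := by nlinarith
  have hx2n : 2 * (n:ℝ) ≤ x := by linarith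
  have hx0 : (0:ℝ) < x := by linarith
  have hxn : (n:ℝ) < x := by linarith
  set P : ℝ := ∏ i ∈ Finset.range (n + 1), (x - i) with hP
  have hfac : ∀ i ∈ Finset.range (n + 1), (0:ℝ) < x - i ∧ x / 2 ≤ x - i := by
    intro i hi
    have : (i:ℝ) ≤ (n:ℝ) := by
      exact_mod_cast Nat.le_of_lt_succ (Finset.mem_range.1 hi)
    constructor <;> linarith
  have hPpos : 0 < P := Finset.prod_pos fun i hi => (hfac i hi).1
  have hPlb : (x / 2) ^ (n + 1) ≤ P := by
    rw [show (x/2)^(n+1) = ∏ _i ∈ Finset.range (n+1), (x/2) by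
      rw [Finset.prod_const, Finset.card_range]]
    exact Finset.prod_le_prod (fun i _ => by positivity) (fun i hi => (hfac i hi).2)
  have hGeq : Real.Gamma (x + 1) = P * Real.Gamma (x - n) := Gamma_sub_nat n hxn
  have hGx : 0 < Real.Gamma x := Real.Gamma_pos_of_pos hx0
  have hGxn : 0 < Real.Gamma (x - n) := Real.Gamma_pos_of_pos (by linarith)
  have hGx1 : 0 < Real.Gamma (x + 1) := Real.Gamma_pos_of_pos (by linarith)
  have hGv : 0 < Real.Gamma (x + 1/2) := Real.Gamma_pos_of_pos (by linarith)
  have hsq : 0 < x ^ ((1:ℝ)/2) := Real.rpow_pos_of_pos hx0 _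
  have hwen : Real.Gamma (x + 1/2) ≤ Real.Gamma x * x ^ ((1:ℝ)/2) := by
    have := wendel_upper hx0 (by norm_num : (0:ℝ) ≤ 1/2) (by norm_num)
    simpa using this
  have hpair := gamma_pair n hn hxn
  -- core inequality
  have hcore : (x + (n:ℝ) * ((n:ℝ) - 1) / 2) * x ^ (n + 1) ≤ 2 ^ (n + 2) * (x * P) := by
    have h2x : x + (n:ℝ) * ((n:ℝ) - 1) / 2 ≤ 2 * x := by linarith
    have hxp : x ^ (n + 1) ≤ 2 ^ (n + 1) * P := by
      have := hPlb
      rw [div_pow] at this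
      rw [div_le_iff₀ (by positivity : (0:ℝ) < 2 ^ (n+1))] at this
      linarith [this]
    calc (x + (n:ℝ) * ((n:ℝ) - 1) / 2) * x ^ (n + 1) ≤ (2 * x) * (2 ^ (n + 1) * P) :=
          mul_le_mul h2x hxp (by positivity) (by positivity)
      _ = 2 ^ (n + 2) * (x * P) := by ring
  -- main inequality, multiplied out
  have main : Real.Gamma (x - (n : ℝ) / 2) * Real.Gamma (x - ((n : ℝ) - 1) / 2) *
      (x + (n:ℝ) * ((n:ℝ) - 1) / 2) * x ^ (n + 1) ≤
      2 ^ (n + 2) * x ^ ((1:ℝ)/2) * Real.Gamma (x + 1) ^ 2 := by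
    calc Real.Gamma (x - (n : ℝ) / 2) * Real.Gamma (x - ((n : ℝ) - 1) / 2) *
        (x + (n:ℝ) * ((n:ℝ) - 1) / 2) * x ^ (n + 1)
        ≤ (Real.Gamma (x - n) * Real.Gamma (x + 1/2)) *
          (x + (n:ℝ) * ((n:ℝ) - 1) / 2) * x ^ (n + 1) := by
          have hA : (0:ℝ) < x + (n:ℝ) * ((n:ℝ) - 1) / 2 := by linarith
          apply mul_le_mul_of_nonneg_right (mul_le_mul_of_nonneg_right hpair hA.le)
            (by positivity)
      _ ≤ (Real.Gamma (x - n) * (Real.Gamma x * x ^ ((1:ℝ)/2))) *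
          (x + (n:ℝ) * ((n:ℝ) - 1) / 2) * x ^ (n + 1) := by
          have hA : (0:ℝ) < x + (n:ℝ) * ((n:ℝ) - 1) / 2 := by linarith
          apply mul_le_mul_of_nonneg_right (mul_le_mul_of_nonneg_right
            (mul_le_mul_of_nonneg_left hwen hGxn.le) hA.le) (by positivity)
      _ = (Real.Gamma (x - n) * Real.Gamma x * x ^ ((1:ℝ)/2)) *
          ((x + (n:ℝ) * ((n:ℝ) - 1) / 2) * x ^ (n + 1)) := by ring
      _ ≤ (Real.Gamma (x - n) * Real.Gamma x * x ^ ((1:ℝ)/2)) * (2 ^ (n + 2) * (x * P)) := by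
          apply mul_le_mul_of_nonneg_left hcore (by positivity)
      _ = 2 ^ (n + 2) * x ^ ((1:ℝ)/2) * ((x * Real.Gamma x) * (P * Real.Gamma (x - n))) := by
          ring
      _ = 2 ^ (n + 2) * x ^ ((1:ℝ)/2) * Real.Gamma (x + 1) ^ 2 := by
          rw [← hGeq, ← Real.Gamma_add_one hx0.ne']; ring
  have hxpow : x ^ (-((n : ℝ) + 1 / 2)) = x ^ ((1:ℝ)/2) / x ^ (n + 1) := by
    rw [← Real.rpow_natCast x (n + 1), ← Real.rpow_sub hx0]
    congr 1
    push_cast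
    ring
  rw [div_mul_eq_mul_div, div_le_iff₀ (by positivity), hxpow,
    show 2 ^ (n + 2) * (x ^ ((1:ℝ)/2) / x ^ (n + 1)) * Real.Gamma (x + 1) ^ 2 =
      (2 ^ (n + 2) * x ^ ((1:ℝ)/2) * Real.Gamma (x + 1) ^ 2) / x ^ (n + 1) by ring,
    le_div_iff₀ (by positivity : (0:ℝ) < x ^ (n + 1))]
  exact main

lemma term_tendsto (n : ℕ) (hn : 2 ≤ n) (k : ℕ+) :
    Tendsto (fun L : ℝ =>
      L ^ ((n:ℝ) + 1/2) *
        (Real.Gamma (L * k - (n : ℝ) / 2) * Real.Gamma (L * k - ((n : ℝ) - 1) / 2) /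
          Real.Gamma (L * k + 1) ^ 2 * (L * k + n * ((n : ℝ) - 1) / 2)))
      atTop (𝓝 ((k:ℝ) ^ (-((n : ℝ) + 1/2)))) := by
  have hk : (0:ℝ) < (k:ℝ) := by exact_mod_cast k.pos
  have hLk : Tendsto (fun L : ℝ => L * (k:ℝ)) atTop atTop :=
    Tendsto.atTop_mul_const hk tendsto_id
  have hA := (ratio_tendsto (-((n:ℝ)/2))).comp hLk
  have hB := (ratio_tendsto (-(((n:ℝ)-1)/2))).comp hLk
  have hC := (aux_div_tendsto ((n:ℝ) * ((n:ℝ)-1)/2)).comp hLk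
  have T := ((hA.mul hB).mul hC).mul
    (tendsto_const_nhds (x := (k:ℝ) ^ (-((n:ℝ)+1/2))) (f := atTop))
  simp only [one_mul] at T
  refine T.congr' ?_
  filter_upwards [eventually_gt_atTop ((n:ℝ) + 2), eventually_gt_atTop (0:ℝ)] with L hL hL0
  have hk1 : (1:ℝ) ≤ (k:ℝ) := by exact_mod_cast k.one_le
  have hx0 : (0:ℝ) < L * (k:ℝ) := by positivity
  have hxn : (n:ℝ) + 2 < L * (k:ℝ) := lt_of_lt_of_le hL (le_mul_of_one_le_right hL0.le hk1)
  have hn1 : (2:ℝ) ≤ (n:ℝ) := by exact_mod_cast hn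
  simp only [Function.comp, ← sub_eq_add_neg]
  have hGx : 0 < Real.Gamma (L * (k:ℝ)) := Real.Gamma_pos_of_pos hx0
  have hG1 : 0 < Real.Gamma (L * (k:ℝ) - (n:ℝ)/2) := Real.Gamma_pos_of_pos (by linarith)
  have hG2 : 0 < Real.Gamma (L * (k:ℝ) - ((n:ℝ)-1)/2) := Real.Gamma_pos_of_pos (by linarith)
  have e1 : (L*(k:ℝ)) ^ (-((n:ℝ)/2)) * (L*(k:ℝ)) ^ (-(((n:ℝ)-1)/2)) =
      (L*(k:ℝ)) ^ (-((n:ℝ)+1/2)) * (L*(k:ℝ)) := by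
    rw [← Real.rpow_add hx0, ← Real.rpow_add_one hx0.ne' (-((n:ℝ)+1/2))]
    congr 1
    ring
  have e2 : (L*(k:ℝ)) ^ (-((n:ℝ)+1/2)) = (L ^ ((n:ℝ)+1/2))⁻¹ * (k:ℝ) ^ (-((n:ℝ)+1/2)) := by
    rw [Real.mul_rpow hL0.le hk.le, Real.rpow_neg hL0.le]
  have hra : 0 < (L*(k:ℝ)) ^ (-((n:ℝ)/2)) := Real.rpow_pos_of_pos hx0 _
  have hrb : 0 < (L*(k:ℝ)) ^ (-(((n:ℝ)-1)/2)) := Real.rpow_pos_of_pos hx0 _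
  have hLp : 0 < L ^ ((n:ℝ)+1/2) := Real.rpow_pos_of_pos hL0 _
  rw [Real.Gamma_add_one hx0.ne']
  set x := L * (k:ℝ) with hxdef
  set ra := x ^ (-((n:ℝ)/2)) with hra_def
  set rb := x ^ (-(((n:ℝ)-1)/2)) with hrb_def
  set κ := (k:ℝ) ^ (-((n:ℝ)+1/2)) with hκ_def
  set Lp := L ^ ((n:ℝ)+1/2) with hLp_def
  have e3 : ra * rb = Lp⁻¹ * κ * x := by rw [hra_def, hrb_def, e1, e2]
  have hκ0 : 0 < κ := Real.rpow_pos_of_pos hk _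
  have hinv : Lp * Lp⁻¹ = 1 := mul_inv_cancel₀ hLp.ne'
  have hrb' : rb = Lp⁻¹ * κ * x / ra := by
    rw [← e3]; exact (mul_div_cancel_left₀ _ hra.ne').symm
  rw [hrb']
  field_simp

end AuxGammaAsymptotics

/-- The Riemann zeta function at a real argument, `ζ(x) = ∑_{k≥1} k^{-x}`. -/
noncomputable def zetaReal (x : ℝ) : ℝ := ∑' k : ℕ+, (1 : ℝ) / (k : ℝ) ^ x

/-- The series appearing in the constant `C(L,n)` of Theorem 3(c). -/
noncomputable def gammaSeries (n : ℕ) (L : ℝ) : ℝ :=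
  ∑' k : ℕ+,
    Real.Gamma (L * k - (n : ℝ) / 2) * Real.Gamma (L * k - ((n : ℝ) - 1) / 2) /
        Real.Gamma (L * k + 1) ^ 2 *
      (L * k + n * ((n : ℝ) - 1) / 2)

/-- The constant `C(L,n)` of Theorem 3(c). -/
noncomputable def CLn (n : ℕ) (L : ℝ) : ℝ :=
  L ^ 2 / (4 * Real.sqrt Real.pi * Nat.factorial (n - 1)) * gammaSeries n L

/-- Remark (d) after Theorem 3: as `L → ∞`,
`L^{n+1/2} ∑_{k≥1} Γ(Lk-n/2)Γ(Lk-(n-1)/2)/Γ(Lk+1)² (Lk+n(n-1)/2) → ζ(n+1/2)`;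
equivalently `L^{n-3/2} C(L,n) → ζ(n+1/2)/(4√π Γ(n))`. -/
theorem gamma_series_asymptotics
    (n : ℕ) (hn : 2 ≤ n) :
    Filter.Tendsto (fun L : ℝ => L ^ ((n : ℝ) + 1 / 2) * gammaSeries n L)
        Filter.atTop (nhds (zetaReal ((n : ℝ) + 1 / 2)))
    ∧ Filter.Tendsto (fun L : ℝ => L ^ ((n : ℝ) - 3 / 2) * CLn n L)
        Filter.atTop
        (nhds (zetaReal ((n : ℝ) + 1 / 2) /
          (4 * Real.sqrt Real.pi * Real.Gamma (n : ℝ)))) := by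

  have hn1 : (2:ℝ) ≤ (n:ℝ) := by exact_mod_cast hn
  -- summability of the dominating series
  have hsum : Summable (fun k : ℕ+ => (2:ℝ)^(n+2) * (k:ℝ) ^ (-((n:ℝ) + 1/2))) := by
    have h1 : Summable (fun k : ℕ => ((k:ℝ)) ^ (-((n:ℝ) + 1/2))) :=
      Real.summable_nat_rpow.2 (by linarith)
    have h2 := h1.mul_left ((2:ℝ)^(n+2))
    exact h2.subtype _
  -- dominated convergence
  have H := tendsto_tsum_of_dominated_convergence (𝓕 := Filter.atTop)
    (f := fun (L : ℝ) (k : ℕ+) =>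
      L ^ ((n:ℝ) + 1/2) *
        (Real.Gamma (L * k - (n : ℝ) / 2) * Real.Gamma (L * k - ((n : ℝ) - 1) / 2) /
          Real.Gamma (L * k + 1) ^ 2 * (L * k + n * ((n : ℝ) - 1) / 2)))
    (g := fun k : ℕ+ => (k:ℝ) ^ (-((n:ℝ) + 1/2)))
    hsum (fun k => term_tendsto n hn k) ?_
  · have hzeta : (∑' k : ℕ+, (k:ℝ) ^ (-((n:ℝ) + 1/2))) = zetaReal ((n:ℝ) + 1/2) := by
      unfold zetaReal
      congr 1
      funext k
      rw [Real.rpow_neg (by positivity)]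
      exact (one_div _).symm
    have h1 : Filter.Tendsto (fun L : ℝ => L ^ ((n : ℝ) + 1 / 2) * gammaSeries n L)
        Filter.atTop (nhds (zetaReal ((n : ℝ) + 1 / 2))) := by
      rw [← hzeta]
      refine H.congr (fun L => ?_)
      unfold gammaSeries
      rw [tsum_mul_left]
    refine ⟨h1, ?_⟩
    have hfac : ((n - 1).factorial : ℝ) = Real.Gamma (n : ℝ) := by
      have hcast : ((n:ℝ)) = ((n - 1 : ℕ) : ℝ) + 1 := by
        rw [Nat.cast_sub (by omega : 1 ≤ n)]; push_cast; ring
      rw [hcast, Real.Gamma_nat_eq_factorial]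
    have h2 := h1.div_const (4 * Real.sqrt Real.pi * Real.Gamma (n : ℝ))
    refine h2.congr' ?_
    filter_upwards [Filter.eventually_gt_atTop (0:ℝ)] with L hL0
    unfold CLn
    rw [← hfac]
    have hL2 : L ^ ((n:ℝ) + 1/2) = L ^ ((n:ℝ) - 3/2) * L ^ 2 := by
      rw [← Real.rpow_natCast L 2, ← Real.rpow_add hL0]
      congr 1
      ring
    rw [hL2]
    ring
  · -- uniform bound
    filter_upwards [Filter.eventually_ge_atTop (2 * (n:ℝ) + (n:ℝ) * ((n:ℝ) - 1) / 2 + 2)]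
      with L hL k
    have hc : (0:ℝ) ≤ (n:ℝ) * ((n:ℝ) - 1) / 2 := by nlinarith
    have hL0 : (0:ℝ) < L := by linarith
    have hk : (0:ℝ) < (k:ℝ) := by exact_mod_cast k.pos
    have hk1 : (1:ℝ) ≤ (k:ℝ) := by exact_mod_cast k.one_le
    have hx : 2 * (n:ℝ) + (n:ℝ) * ((n:ℝ) - 1) / 2 + 2 ≤ L * (k:ℝ) :=
      le_trans hL (le_mul_of_one_le_right hL0.le hk1)
    have hx0 : (0:ℝ) < L * (k:ℝ) := by positivity
    have hterm_nonneg : 0 ≤ Real.Gamma (L * k - (n : ℝ) / 2) *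
        Real.Gamma (L * k - ((n : ℝ) - 1) / 2) / Real.Gamma (L * k + 1) ^ 2 *
        (L * k + n * ((n : ℝ) - 1) / 2) := by
      have h1 := Real.Gamma_pos_of_pos (show (0:ℝ) < L * k - (n : ℝ) / 2 by linarith)
      have h2 := Real.Gamma_pos_of_pos (show (0:ℝ) < L * k - ((n : ℝ) - 1) / 2 by linarith)
      have h3 := Real.Gamma_pos_of_pos (show (0:ℝ) < L * k + 1 by linarith)
      positivity
    have hb := term_bound n hn hx
    have hLpow : (0:ℝ) < L ^ ((n:ℝ) + 1/2) := Real.rpow_pos_of_pos hL0 _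
    rw [Real.norm_eq_abs, abs_of_nonneg (by positivity)]
    calc L ^ ((n:ℝ) + 1/2) * (Real.Gamma (L * k - (n : ℝ) / 2) *
          Real.Gamma (L * k - ((n : ℝ) - 1) / 2) / Real.Gamma (L * k + 1) ^ 2 *
          (L * k + n * ((n : ℝ) - 1) / 2))
        ≤ L ^ ((n:ℝ) + 1/2) * (2 ^ (n + 2) * (L * (k:ℝ)) ^ (-((n:ℝ) + 1/2))) :=
          mul_le_mul_of_nonneg_left hb hLpow.le
      _ = (2:ℝ)^(n+2) * (k:ℝ) ^ (-((n:ℝ) + 1/2)) := by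
          rw [Real.mul_rpow hL0.le hk.le]
          rw [show L ^ ((n:ℝ) + 1/2) * (2 ^ (n + 2) * (L ^ (-((n:ℝ) + 1/2)) *
            (k:ℝ) ^ (-((n:ℝ) + 1/2)))) = (L ^ ((n:ℝ) + 1/2) * L ^ (-((n:ℝ) + 1/2))) *
            (2 ^ (n + 2) * (k:ℝ) ^ (-((n:ℝ) + 1/2))) by ring,
            ← Real.rpow_add hL0, add_neg_cancel, Real.rpow_zero, one_mul]
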